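/- The ratio max{hK + (K-1)K/2, (K-1)² + h(h+1)/2} / ((K-1)(h+K-1) + h(h+1)/2), minimized over positive integers h ≥ K, converges to 2/(2+√2) as K → ∞. -/

import Mathlib

open Filter Real

noncomputable def hseq (K : ℕ) : ℕ := ⌈Real.sqrt 2 * K⌉₊

lemma one_le_sqrt2 : (1:ℝ) ≤ Real.sqrt 2 := by
  nlinarith [Real.sq_sqrt (by norm_num : (0:ℝ) ≤ 2), Real.sqrt_nonneg 2]

lemma hseq_ge (K : ℕ) : K ≤ hseq K := by
  have h1 : (K:ℝ) ≤ Real.sqrt 2 * K := by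
    nlinarith [one_le_sqrt2, (Nat.cast_nonneg K : (0:ℝ) ≤ K)]
  calc K = ⌈(K:ℝ)⌉₊ := (Nat.ceil_natCast K).symm
    _ ≤ hseq K := Nat.ceil_le_ceil h1

lemma denom_pos (K : ℕ) (hK : 1 ≤ K) (h : ℕ) (hh : K ≤ h) :
    0 < ((K : ℝ) - 1) * ((h : ℝ) + K - 1) + (h : ℝ) * (h + 1) / 2 := by
  have hK1 : (1:ℝ) ≤ K := by exact_mod_cast hK
  have hh1 : (1:ℝ) ≤ h := by exact_mod_cast hK.trans hh
  nlinarith [mul_nonneg (by linarith : (0:ℝ) ≤ (K:ℝ) - 1) (by linarith : (0:ℝ) ≤ (h:ℝ) + K - 1)]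

lemma elem_lower (K : ℕ) (hK : 1 ≤ K) (h : ℕ) (hh : K ≤ h) :
    2 / (2 + Real.sqrt 2) ≤
      max ((h : ℝ) * K + ((K : ℝ) - 1) * K / 2)
          (((K : ℝ) - 1) ^ 2 + (h : ℝ) * (h + 1) / 2) /
        (((K : ℝ) - 1) * ((h : ℝ) + K - 1) + (h : ℝ) * (h + 1) / 2) := by
  have hD := denom_pos K hK h hh
  have hK1 : (1:ℝ) ≤ K := by exact_mod_cast hK
  have hh1 : (1:ℝ) ≤ h := by exact_mod_cast hK.trans hh
  have hs2 : Real.sqrt 2 ^ 2 = 2 := Real.sq_sqrt (by norm_num)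
  have hs0 : (0:ℝ) ≤ Real.sqrt 2 := Real.sqrt_nonneg 2
  have step1 : 2 / (2 + Real.sqrt 2) ≤
      (((K : ℝ) - 1) ^ 2 + (h : ℝ) * (h + 1) / 2) /
        (((K : ℝ) - 1) * ((h : ℝ) + K - 1) + (h : ℝ) * (h + 1) / 2) := by
    rw [div_le_div_iff₀ (by linarith) hD]
    have key : Real.sqrt 2 * ((h:ℝ) - Real.sqrt 2 * ((K:ℝ) - 1))^2 =
        Real.sqrt 2 * (h:ℝ)^2 - 4*(h:ℝ)*((K:ℝ)-1) + 2*Real.sqrt 2*((K:ℝ)-1)^2 := by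
      linear_combination (Real.sqrt 2*((K:ℝ)-1)^2 - 2*(h:ℝ)*((K:ℝ)-1)) * hs2
    have key2 : 0 ≤ Real.sqrt 2 * (h:ℝ)^2 - 4*(h:ℝ)*((K:ℝ)-1) + 2*Real.sqrt 2*((K:ℝ)-1)^2 := by
      rw [← key]; positivity
    nlinarith [key2, mul_nonneg hs0 (by linarith : (0:ℝ) ≤ (h:ℝ)),
      mul_nonneg hs0 (sq_nonneg ((K:ℝ)-1)), mul_nonneg hs0 (sq_nonneg (h:ℝ))]
  exact step1.trans ((div_le_div_iff_of_pos_right hD).mpr (le_max_right _ _))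

noncomputable def cc (K : ℕ) : ℝ := (hseq K : ℝ) / K

lemma he_tendsto : Tendsto (fun K : ℕ => (1:ℝ)/K) atTop (nhds 0) :=
  tendsto_one_div_atTop_nhds_zero_nat

lemma cc_tendsto : Tendsto cc atTop (nhds (Real.sqrt 2)) := by
  refine tendsto_of_tendsto_of_tendsto_of_le_of_le' tendsto_const_nhds
    (by simpa using (tendsto_const_nhds (x := Real.sqrt 2)).add he_tendsto) ?_ ?_
  · filter_upwards [eventually_ge_atTop 1] with K hK
    have hk : (0:ℝ) < K := by exact_mod_cast hK
    rw [cc, le_div_iff₀ hk]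
    exact Nat.le_ceil _
  · filter_upwards [eventually_ge_atTop 1] with K hK
    have hk : (0:ℝ) < K := by exact_mod_cast hK
    rw [cc, div_le_iff₀ hk]
    have := (Nat.ceil_lt_add_one (by positivity : (0:ℝ) ≤ Real.sqrt 2 * K)).le
    calc ((hseq K : ℝ)) ≤ Real.sqrt 2 * K + 1 := this
      _ = (Real.sqrt 2 + ((K:ℝ))⁻¹) * K := by field_simp

noncomputable def F (K : ℕ) : ℝ :=
  max ((hseq K : ℝ) * K + ((K : ℝ) - 1) * K / 2)
      (((K : ℝ) - 1) ^ 2 + (hseq K : ℝ) * (hseq K + 1) / 2) /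
    (((K : ℝ) - 1) * ((hseq K : ℝ) + K - 1) + (hseq K : ℝ) * (hseq K + 1) / 2)

noncomputable def G (K : ℕ) : ℝ :=
  max (cc K + (1 - 1/K)/2) ((1 - 1/K)^2 + cc K * (cc K + 1/K)/2) /
    ((1 - 1/K) * (cc K + 1 - 1/K) + cc K * (cc K + 1/K)/2)

lemma F_eq_G (K : ℕ) (hK : 1 ≤ K) : F K = G K := by
  have hk : ((K:ℝ)) ≠ 0 := by
    have : (0:ℝ) < K := by exact_mod_cast hK
    exact this.ne'
  have e1 : (hseq K : ℝ) * K + ((K : ℝ) - 1) * K / 2 = (cc K + (1 - 1/K)/2) * (K:ℝ)^2 := by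
    rw [cc]; field_simp
  have e2 : ((K : ℝ) - 1) ^ 2 + (hseq K : ℝ) * (hseq K + 1) / 2
      = ((1 - 1/K)^2 + cc K * (cc K + 1/K)/2) * (K:ℝ)^2 := by
    rw [cc]; field_simp
  have e3 : ((K : ℝ) - 1) * ((hseq K : ℝ) + K - 1) + (hseq K : ℝ) * (hseq K + 1) / 2
      = ((1 - 1/K) * (cc K + 1 - 1/K) + cc K * (cc K + 1/K)/2) * (K:ℝ)^2 := by
    rw [cc]; field_simp
  rw [F, G, e1, e2, e3, ← max_mul_of_nonneg _ _ (by positivity : (0:ℝ) ≤ (K:ℝ)^2),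
    mul_div_mul_right _ _ (by positivity : ((K:ℝ)^2) ≠ 0)]

lemma G_tendsto : Tendsto G atTop (nhds (2 / (2 + Real.sqrt 2))) := by
  have hc := cc_tendsto
  have he := he_tendsto
  have hs2 : Real.sqrt 2 * Real.sqrt 2 = 2 := Real.mul_self_sqrt (by norm_num)
  have num1 : Tendsto (fun K : ℕ => cc K + (1 - 1/K)/2) atTop
      (nhds (Real.sqrt 2 + (1 - 0)/2)) :=
    hc.add ((tendsto_const_nhds.sub he).div_const 2)
  have num2 : Tendsto (fun K : ℕ => (1 - 1/K)^2 + cc K * (cc K + 1/K)/2) atTop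
      (nhds ((1 - 0)^2 + Real.sqrt 2 * (Real.sqrt 2 + 0)/2)) :=
    ((tendsto_const_nhds.sub he).pow 2).add ((hc.mul (hc.add he)).div_const 2)
  have den : Tendsto (fun K : ℕ => (1 - 1/K) * (cc K + 1 - 1/K) + cc K * (cc K + 1/K)/2) atTop
      (nhds ((1 - 0) * (Real.sqrt 2 + 1 - 0) + Real.sqrt 2 * (Real.sqrt 2 + 0)/2)) :=
    ((tendsto_const_nhds.sub he).mul (((hc.add tendsto_const_nhds).sub he))).add
      ((hc.mul (hc.add he)).div_const 2)
  have hdne : ((1:ℝ) - 0) * (Real.sqrt 2 + 1 - 0) + Real.sqrt 2 * (Real.sqrt 2 + 0)/2 ≠ 0 := by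
    nlinarith [Real.sqrt_nonneg 2]
  have final := (num1.max num2).div den hdne
  have hval : max (Real.sqrt 2 + (1 - 0)/2) ((1 - 0)^2 + Real.sqrt 2 * (Real.sqrt 2 + 0)/2) /
      (((1:ℝ) - 0) * (Real.sqrt 2 + 1 - 0) + Real.sqrt 2 * (Real.sqrt 2 + 0)/2)
      = 2 / (2 + Real.sqrt 2) := by
    have h2 : Real.sqrt 2 + ((1:ℝ) - 0)/2 ≤ (1 - 0)^2 + Real.sqrt 2 * (Real.sqrt 2 + 0)/2 := by
      nlinarith [sq_nonneg (Real.sqrt 2 - 1.5)]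
    rw [max_eq_right h2]
    have n1 : ((1:ℝ) - 0)^2 + Real.sqrt 2 * (Real.sqrt 2 + 0)/2 = 2 := by linear_combination hs2/2
    have d1 : ((1:ℝ) - 0) * (Real.sqrt 2 + 1 - 0) + Real.sqrt 2 * (Real.sqrt 2 + 0)/2
        = 2 + Real.sqrt 2 := by linear_combination hs2/2
    rw [n1, d1]
  exact hval ▸ final

theorem ratio_limit :
    Filter.Tendsto (fun K : ℕ =>
      sInf { x : ℝ | ∃ h : ℕ, K ≤ h ∧
        x = max ((h : ℝ) * K + ((K : ℝ) - 1) * K / 2)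
                (((K : ℝ) - 1) ^ 2 + (h : ℝ) * (h + 1) / 2) /
            (((K : ℝ) - 1) * ((h : ℝ) + K - 1) + (h : ℝ) * (h + 1) / 2) })
      Filter.atTop (nhds (2 / (2 + Real.sqrt 2))) := by
  have hF : Tendsto F atTop (nhds (2 / (2 + Real.sqrt 2))) := by
    refine G_tendsto.congr' ?_
    filter_upwards [eventually_ge_atTop 1] with K hK
    exact (F_eq_G K hK).symm
  refine tendsto_of_tendsto_of_tendsto_of_le_of_le' tendsto_const_nhds hF ?_ ?_
  · filter_upwards [eventually_ge_atTop 1] with K hK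
    refine le_csInf ⟨F K, hseq K, hseq_ge K, rfl⟩ ?_
    rintro x ⟨h, hh, rfl⟩
    exact elem_lower K hK h hh
  · filter_upwards [eventually_ge_atTop 1] with K hK
    refine csInf_le ⟨2 / (2 + Real.sqrt 2), ?_⟩ ⟨hseq K, hseq_ge K, rfl⟩
    rintro x ⟨h, hh, rfl⟩
    exact elem_lower K hK h hh
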